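/- Let S and A be finite nonempty sets, f : S × A → ℝ, λ(s'|s,a) ≥ 0 for s' ≠ s with total rate Λ(s,a) := ∑_{s'≠s} λ(s'|s,a), and γ > 0. Let V₀ be the unique solution of the continuous-time optimality equation and, for each Δ > 0 with Δ·Λ(s,a) ≤ 1 for all (s,a), let V_Δ be the unique solution of the discrete-time Bellman equation with increment Δ. Assume that for every s the maximizer over a ∈ A of the continuous-time right-hand side at V₀ is unique, and that for every such Δ and s the maximizer of the discrete-time right-hand side at V_Δ is unique. Then there exist Δ₀ > 0 and a constant C_V > 0, independent of Δ, such that for all Δ ∈ (0, Δ₀): ‖V_Δ − V₀‖ ≤ C_V·Δ, where ‖V‖ := max_{s∈S} |V(s)|. -/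

import Mathlib

/-- Right-hand side of the continuous-time dynamic programming optimality
equation at a value function `V`:
`f(s,a) + ∑_{s'≠s} λ(s'|s,a)·V(s') − Λ(s,a)·V(s)`. -/
noncomputable def contRHS {S A : Type*} [Fintype S] [DecidableEq S]
    (f : S → A → ℝ) (lam : S → S → A → ℝ) (V : S → ℝ) (s : S) (a : A) : ℝ :=
  f s a + (∑ s' ∈ Finset.univ.erase s, lam s' s a * V s')
    - (∑ s' ∈ Finset.univ.erase s, lam s' s a) * V s

/-- Right-hand side of the discrete-time Bellman equation with increment `Δ`
at a value function `V`:
`Δ·f(s,a) + e^{−γΔ}·∑_{s'} p_Δ(s'|s,a)·V(s')` with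
`p_Δ(s'|s,a) = Δ·λ(s'|s,a)` for `s' ≠ s` and `p_Δ(s|s,a) = 1 − Δ·Λ(s,a)`. -/
noncomputable def discRHS {S A : Type*} [Fintype S] [DecidableEq S]
    (f : S → A → ℝ) (lam : S → S → A → ℝ) (γ Δ : ℝ) (V : S → ℝ)
    (s : S) (a : A) : ℝ :=
  Δ * f s a + Real.exp (-(γ * Δ)) *
    ((1 - Δ * ∑ s' ∈ Finset.univ.erase s, lam s' s a) * V s +
      ∑ s' ∈ Finset.univ.erase s, Δ * lam s' s a * V s')

/-- Auxiliary: `sup'` is 1-Lipschitz for the uniform distance. -/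
lemma my_abs_sup'_sub_sup'_le {ι : Type*} (t : Finset ι) (ht : t.Nonempty)
    (g h : ι → ℝ) (c : ℝ) (hc : ∀ i ∈ t, |g i - h i| ≤ c) :
    |t.sup' ht g - t.sup' ht h| ≤ c := by
  rw [abs_sub_le_iff]
  constructor
  · rw [sub_le_iff_le_add]
    refine Finset.sup'_le ht g fun i hi => ?_
    have h1 := (abs_sub_le_iff.mp (hc i hi)).1
    have h2 : h i ≤ t.sup' ht h := Finset.le_sup' h hi
    linarith
  · rw [sub_le_iff_le_add]
    refine Finset.sup'_le ht h fun i hi => ?_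
    have h1 := (abs_sub_le_iff.mp (hc i hi)).2
    have h2 : g i ≤ t.sup' ht g := Finset.le_sup' g hi
    linarith

set_option maxHeartbeats 1000000 in
/-- `O(Δ)` bound for the discretization error of the optimal value functions:
under uniqueness of the maximizers of the continuous-time right-hand side at
`V₀` and of the discrete-time right-hand side at `V_Δ`, there exist `Δ₀ > 0`
and a constant `C_V > 0`, independent of `Δ`, such that
`‖V_Δ − V₀‖ ≤ C_V·Δ` for all admissible `Δ ∈ (0, Δ₀)`. -/
theorem discretized_value_function_error_O_Delta
    {S A : Type*} [Fintype S] [Nonempty S] [DecidableEq S]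
    [Fintype A] [Nonempty A]
    (f : S → A → ℝ) (lam : S → S → A → ℝ)
    (hlam : ∀ s' s a, s' ≠ s → 0 ≤ lam s' s a)
    (γ : ℝ) (hγ : 0 < γ)
    (V₀ : S → ℝ)
    (hV₀ : ∀ s : S, γ * V₀ s =
      Finset.univ.sup' Finset.univ_nonempty (contRHS f lam V₀ s))
    (ha₀ : ∀ s : S, ∃ a : A, ∀ a' : A, a' ≠ a →
      contRHS f lam V₀ s a' < contRHS f lam V₀ s a)
    (VΔ : ℝ → S → ℝ)
    (hVΔ : ∀ Δ : ℝ, 0 < Δ →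
      (∀ s a, Δ * (∑ s' ∈ Finset.univ.erase s, lam s' s a) ≤ 1) →
      ∀ s : S, VΔ Δ s =
        Finset.univ.sup' Finset.univ_nonempty (discRHS f lam γ Δ (VΔ Δ) s))
    (haΔ : ∀ Δ : ℝ, 0 < Δ →
      (∀ s a, Δ * (∑ s' ∈ Finset.univ.erase s, lam s' s a) ≤ 1) →
      ∀ s : S, ∃ a : A, ∀ a' : A, a' ≠ a →
        discRHS f lam γ Δ (VΔ Δ) s a' < discRHS f lam γ Δ (VΔ Δ) s a) :
    ∃ Δ₀ > (0 : ℝ), ∃ C_V > (0 : ℝ), ∀ Δ : ℝ, 0 < Δ → Δ < Δ₀ →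
      (∀ s a, Δ * (∑ s' ∈ Finset.univ.erase s, lam s' s a) ≤ 1) →
      Finset.univ.sup' Finset.univ_nonempty (fun s : S => |VΔ Δ s - V₀ s|) ≤
        C_V * Δ := by
  classical
  -- uniform bounds on f and V₀
  set F : ℝ := Finset.univ.sup' Finset.univ_nonempty
    (fun p : S × A => |f p.1 p.2|) with hFdef
  have hF : ∀ s a, |f s a| ≤ F := fun s a =>
    Finset.le_sup' (fun p : S × A => |f p.1 p.2|) (Finset.mem_univ (s, a))
  have hF0 : 0 ≤ F := le_trans (abs_nonneg _)
    (hF (Classical.arbitrary S) (Classical.arbitrary A))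
  set M : ℝ := Finset.univ.sup' Finset.univ_nonempty (fun s : S => |V₀ s|)
    with hMdef
  have hM : ∀ s, |V₀ s| ≤ M := fun s =>
    Finset.le_sup' (fun s : S => |V₀ s|) (Finset.mem_univ s)
  have hM0 : 0 ≤ M := le_trans (abs_nonneg _) (hM (Classical.arbitrary S))
  have hγM : 0 ≤ γ * M := mul_nonneg hγ.le hM0
  refine ⟨1 / γ, one_div_pos.mpr hγ, 3 * F + 3 * γ * M + 1, by linarith, ?_⟩
  intro Δ hΔ hΔ₀ hadm
  have hx : 0 < γ * Δ := mul_pos hγ hΔ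
  have hx1 : γ * Δ < 1 := by
    have h := (lt_div_iff₀ hγ).mp hΔ₀
    nlinarith
  set e : ℝ := Real.exp (-(γ * Δ)) with hedef
  have he0 : 0 < e := Real.exp_pos _
  have he2 : 1 - γ * Δ ≤ e := by
    have := Real.add_one_le_exp (-(γ * Δ)); linarith
  have he1 : e * (1 + γ * Δ) ≤ 1 := by
    have h := Real.add_one_le_exp (γ * Δ)
    have := mul_le_mul_of_nonneg_right h he0.le
    rw [← Real.exp_add] at this
    simp only [add_neg_cancel, Real.exp_zero] at this
    nlinarith
  have hethird : γ * Δ / 3 ≤ 1 - e := by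
    -- 1 - e ≥ γΔ·e ≥ γΔ·exp(-1) ≥ γΔ/3
    have h1 : γ * Δ * e ≤ 1 - e := by nlinarith
    have h2 : Real.exp (-1 : ℝ) ≤ e := by
      apply Real.exp_le_exp.mpr; linarith
    have h3 : (1 : ℝ) / 3 ≤ Real.exp (-1 : ℝ) := by
      rw [Real.exp_neg]
      rw [div_le_iff₀ (by positivity)]
      rw [inv_mul_eq_div, le_div_iff₀ (Real.exp_pos 1)]
      nlinarith [Real.exp_one_lt_d9]
    nlinarith
  set D : ℝ := Finset.univ.sup' Finset.univ_nonempty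
    (fun s : S => |VΔ Δ s - V₀ s|) with hDdef
  have hD : ∀ s, |VΔ Δ s - V₀ s| ≤ D := fun s =>
    Finset.le_sup' (fun s : S => |VΔ Δ s - V₀ s|) (Finset.mem_univ s)
  have hD0 : 0 ≤ D := le_trans (abs_nonneg _) (hD (Classical.arbitrary S))
  set K : ℝ := γ * F + γ ^ 2 * M with hKdef
  -- key pointwise estimate
  have hA : ∀ s : S, |VΔ Δ s - V₀ s| ≤ e * D + K * Δ ^ 2 := by
    intro s
    -- contraction step
    have hcontr : |Finset.univ.sup' Finset.univ_nonempty
        (discRHS f lam γ Δ (VΔ Δ) s) - Finset.univ.sup' Finset.univ_nonempty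
        (discRHS f lam γ Δ V₀ s)| ≤ e * D := by
      apply my_abs_sup'_sub_sup'_le
      intro a _
      set Lam : ℝ := ∑ s' ∈ Finset.univ.erase s, lam s' s a with hLamdef
      have hdiff : discRHS f lam γ Δ (VΔ Δ) s a - discRHS f lam γ Δ V₀ s a
          = e * ((1 - Δ * Lam) * (VΔ Δ s - V₀ s) +
            ∑ s' ∈ Finset.univ.erase s, Δ * lam s' s a * (VΔ Δ s' - V₀ s')) := by
        rw [hLamdef]
        simp only [discRHS, mul_sub, Finset.sum_sub_distrib, hedef]
        ring
      rw [hdiff, abs_mul, abs_of_pos he0]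
      have hΛnn : 0 ≤ Δ * Lam := by
        apply mul_nonneg hΔ.le
        exact Finset.sum_nonneg fun s' hs' =>
          hlam s' s a (Finset.ne_of_mem_erase hs')
      have hΛle : Δ * Lam ≤ 1 := hadm s a
      have hin : |(1 - Δ * Lam) * (VΔ Δ s - V₀ s) +
          ∑ s' ∈ Finset.univ.erase s, Δ * lam s' s a * (VΔ Δ s' - V₀ s')|
          ≤ D := by
        calc |(1 - Δ * Lam) * (VΔ Δ s - V₀ s) +
            ∑ s' ∈ Finset.univ.erase s, Δ * lam s' s a * (VΔ Δ s' - V₀ s')|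
            ≤ |(1 - Δ * Lam) * (VΔ Δ s - V₀ s)| +
              |∑ s' ∈ Finset.univ.erase s, Δ * lam s' s a * (VΔ Δ s' - V₀ s')| :=
              abs_add_le _ _
          _ ≤ (1 - Δ * Lam) * D +
              ∑ s' ∈ Finset.univ.erase s, Δ * lam s' s a * D := by
              gcongr ?_ + ?_
              · rw [abs_mul, abs_of_nonneg (by linarith)]
                exact mul_le_mul_of_nonneg_left (hD s) (by linarith)
              · refine le_trans (Finset.abs_sum_le_sum_abs _ _) ?_
                refine Finset.sum_le_sum fun s' hs' => ?_
                rw [abs_mul, abs_of_nonneg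
                  (mul_nonneg hΔ.le (hlam s' s a (Finset.ne_of_mem_erase hs')))]
                exact mul_le_mul_of_nonneg_left (hD s')
                  (mul_nonneg hΔ.le (hlam s' s a (Finset.ne_of_mem_erase hs')))
          _ = D := by
              have hs2 : ∑ s' ∈ Finset.univ.erase s, Δ * lam s' s a * D
                  = Δ * Lam * D := by
                rw [hLamdef, Finset.mul_sum, Finset.sum_mul]
              rw [hs2]; ring
      exact mul_le_mul_of_nonneg_left hin he0.le
    -- discRHS at V₀ vs the rescaled continuous RHS
    have hstep2 : |Finset.univ.sup' Finset.univ_nonempty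
        (discRHS f lam γ Δ V₀ s) - Finset.univ.sup' Finset.univ_nonempty
        (fun a => e * V₀ s + Δ * e * contRHS f lam V₀ s a)| ≤ γ * F * Δ ^ 2 := by
      apply my_abs_sup'_sub_sup'_le
      intro a _
      have hid : discRHS f lam γ Δ V₀ s a -
          (e * V₀ s + Δ * e * contRHS f lam V₀ s a) = Δ * (1 - e) * f s a := by
        have hsum : ∑ s' ∈ Finset.univ.erase s, Δ * lam s' s a * V₀ s'
            = Δ * ∑ s' ∈ Finset.univ.erase s, lam s' s a * V₀ s' := by
          rw [Finset.mul_sum]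
          exact Finset.sum_congr rfl fun s' _ => by ring
        simp only [discRHS, contRHS, hedef, hsum]
        ring
      rw [hid, abs_mul, abs_mul, abs_of_pos hΔ, abs_of_nonneg (by linarith : (0:ℝ) ≤ 1 - e)]
      calc Δ * (1 - e) * |f s a| ≤ Δ * (γ * Δ) * F := by
            apply mul_le_mul (by nlinarith) (hF s a) (abs_nonneg _) (mul_nonneg hΔ.le hx.le)
        _ = γ * F * Δ ^ 2 := by ring
    -- evaluate the rescaled continuous sup
    have hstep3 : Finset.univ.sup' Finset.univ_nonempty
        (fun a => e * V₀ s + Δ * e * contRHS f lam V₀ s a)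
        = e * V₀ s + Δ * e * (γ * V₀ s) := by
      have hmono : Monotone (fun v : ℝ => e * V₀ s + Δ * e * v) := by
        intro p q hpq
        exact add_le_add_right (mul_le_mul_of_nonneg_left hpq
          (mul_nonneg hΔ.le he0.le)) _
      have hcs := Finset.comp_sup'_eq_sup'_comp (Finset.univ_nonempty (α := A))
        (f := contRHS f lam V₀ s) (fun v : ℝ => e * V₀ s + Δ * e * v)
        (fun x y => hmono.map_max)
      simp only [Function.comp_def] at hcs
      rw [hV₀ s]
      exact hcs.symm
    have hstep4 : |e * V₀ s + Δ * e * (γ * V₀ s) - V₀ s| ≤ γ ^ 2 * M * Δ ^ 2 := by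
      have hfac : e * V₀ s + Δ * e * (γ * V₀ s) - V₀ s
          = (e * (1 + γ * Δ) - 1) * V₀ s := by ring
      rw [hfac, abs_mul]
      have hlo : 1 - (γ * Δ) ^ 2 ≤ e * (1 + γ * Δ) := by nlinarith
      have habs : |e * (1 + γ * Δ) - 1| ≤ (γ * Δ) ^ 2 := by
        rw [abs_le]; constructor <;> nlinarith
      calc |e * (1 + γ * Δ) - 1| * |V₀ s| ≤ (γ * Δ) ^ 2 * M :=
            mul_le_mul habs (hM s) (abs_nonneg _) (by positivity)
        _ = γ ^ 2 * M * Δ ^ 2 := by ring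
    -- combine
    rw [hVΔ Δ hΔ hadm s]
    set X₁ := Finset.univ.sup' Finset.univ_nonempty (discRHS f lam γ Δ (VΔ Δ) s)
    set X₂ := Finset.univ.sup' Finset.univ_nonempty (discRHS f lam γ Δ V₀ s)
    set X₃ := Finset.univ.sup' Finset.univ_nonempty
      (fun a => e * V₀ s + Δ * e * contRHS f lam V₀ s a)
    have t1 : |X₁ - V₀ s| ≤ |X₁ - X₂| + |X₂ - X₃| + |X₃ - V₀ s| := by
      have := abs_sub_le X₁ X₂ (V₀ s)
      have := abs_sub_le X₂ X₃ (V₀ s)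
      linarith
    have t2 : |X₃ - V₀ s| ≤ γ ^ 2 * M * Δ ^ 2 := by rw [hstep3]; exact hstep4
    have : |X₁ - V₀ s| ≤ e * D + γ * F * Δ ^ 2 + γ ^ 2 * M * Δ ^ 2 := by
      linarith
    calc |X₁ - V₀ s| ≤ e * D + γ * F * Δ ^ 2 + γ ^ 2 * M * Δ ^ 2 := this
      _ = e * D + K * Δ ^ 2 := by rw [hKdef]; ring
  -- conclude
  have hDle : D ≤ e * D + K * Δ ^ 2 :=
    Finset.sup'_le _ _ fun s _ => hA s
  have h6 : γ * Δ / 3 * D ≤ K * Δ ^ 2 := by nlinarith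
  have hpos : 0 < γ * Δ / 3 := by linarith
  have h7 : D ≤ (3 * F + 3 * γ * M) * Δ := by
    have h8 : γ * Δ / 3 * D ≤ γ * Δ / 3 * ((3 * F + 3 * γ * M) * Δ) := by
      calc γ * Δ / 3 * D ≤ K * Δ ^ 2 := h6
        _ = γ * Δ / 3 * ((3 * F + 3 * γ * M) * Δ) := by rw [hKdef]; ring
    exact (mul_le_mul_iff_right₀ hpos).mp h8
  calc D ≤ (3 * F + 3 * γ * M) * Δ := h7
    _ ≤ (3 * F + 3 * γ * M + 1) * Δ := by nlinarith
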